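/- Let G ⊂ ℝ² be an open disc of radius r centered at the origin, b ∈ C²(closure of the annulus G* = {x ∈ G : |x| > r/2}) with 0 < b₁ ≤ b ≤ b₂ on G*. Then there exists β > 0, depending only on r, b₁, b₂ and the C² norm of b, such that the function Q̃(φ,ψ) = e^{−βr²} − e^{−β(φ²+ψ²)} satisfies ∂²Q̃/∂φ² + ∂²(b·Q̃)/∂ψ² ≤ 0 on G*. -/

import Mathlib

open Set

/-- derivative of `exp (-β(t²+c))` -/
theorem expA_hasDeriv (β c x : ℝ) :
    HasDerivAt (fun t : ℝ => Real.exp (-β * (t ^ 2 + c)))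
      (-2 * β * x * Real.exp (-β * (x ^ 2 + c))) x := by
  have h1 : HasDerivAt (fun t : ℝ => -β * (t ^ 2 + c)) (-β * (2 * x)) x := by
    have h0 : HasDerivAt (fun t : ℝ => t ^ 2 + c) (2 * x) x := by
      simpa using (hasDerivAt_pow 2 x).add_const c
    simpa using h0.const_mul (-β)
  have h2 := (Real.hasDerivAt_exp (-β * (x ^ 2 + c))).comp x h1
  exact h2.congr_deriv (by ring)

/-- derivative of `exp (-β(c+t²))` -/
theorem expB_hasDeriv (β c y : ℝ) :
    HasDerivAt (fun t : ℝ => Real.exp (-β * (c + t ^ 2)))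
      (-2 * β * y * Real.exp (-β * (c + y ^ 2))) y := by
  have h1 : HasDerivAt (fun t : ℝ => -β * (c + t ^ 2)) (-β * (2 * y)) y := by
    have h0 : HasDerivAt (fun t : ℝ => c + t ^ 2) (2 * y) y := by
      simpa using (hasDerivAt_pow 2 y).const_add c
    simpa using h0.const_mul (-β)
  have h2 := (Real.hasDerivAt_exp (-β * (c + y ^ 2))).comp y h1
  exact h2.congr_deriv (by ring)

set_option maxHeartbeats 2000000 in
/-- Barrier construction in the Hopf-lemma argument: on the annulus
`G* = {r²/4 < φ²+ψ² < r²}`, for a `C²` coefficient `b` with `0 < b₁ ≤ b ≤ b₂`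
and bounded first and second `ψ`-derivatives, there exists `β > 0` such that
`Q̃(φ,ψ) = e^{−βr²} − e^{−β(φ²+ψ²)}` satisfies
`∂²Q̃/∂φ² + ∂²(b·Q̃)/∂ψ² ≤ 0` on `G*`. -/
theorem stmt_10 (r b₁ b₂ K₁ K₂ : ℝ) (b : ℝ → ℝ → ℝ)
    (hr : 0 < r) (hb₁ : 0 < b₁) (hb₁₂ : b₁ ≤ b₂)
    (hb : ∀ φ ψ : ℝ, r ^ 2 / 4 < φ ^ 2 + ψ ^ 2 → φ ^ 2 + ψ ^ 2 < r ^ 2 →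
      b₁ ≤ b φ ψ ∧ b φ ψ ≤ b₂)
    (hsmooth : ∀ φ ψ : ℝ, r ^ 2 / 4 < φ ^ 2 + ψ ^ 2 → φ ^ 2 + ψ ^ 2 < r ^ 2 →
      DifferentiableAt ℝ (b φ) ψ ∧ DifferentiableAt ℝ (deriv (b φ)) ψ)
    (hK₁ : ∀ φ ψ : ℝ, r ^ 2 / 4 < φ ^ 2 + ψ ^ 2 → φ ^ 2 + ψ ^ 2 < r ^ 2 →
      |deriv (b φ) ψ| ≤ K₁)
    (hK₂ : ∀ φ ψ : ℝ, r ^ 2 / 4 < φ ^ 2 + ψ ^ 2 → φ ^ 2 + ψ ^ 2 < r ^ 2 →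
      |deriv (deriv (b φ)) ψ| ≤ K₂) :
    ∃ β : ℝ, 0 < β ∧
      ∀ φ ψ : ℝ, r ^ 2 / 4 < φ ^ 2 + ψ ^ 2 → φ ^ 2 + ψ ^ 2 < r ^ 2 →
        deriv (deriv (fun x : ℝ =>
            Real.exp (-β * r ^ 2) - Real.exp (-β * (x ^ 2 + ψ ^ 2)))) φ +
        deriv (deriv (fun y : ℝ =>
            b φ y * (Real.exp (-β * r ^ 2) - Real.exp (-β * (φ ^ 2 + y ^ 2))))) ψ ≤ 0 := by
  -- K₁, K₂ are nonnegative since the annulus is nonempty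
  have hwit1 : r ^ 2 / 4 < (3 * r / 4) ^ 2 + (0:ℝ) ^ 2 := by nlinarith
  have hwit2 : (3 * r / 4) ^ 2 + (0:ℝ) ^ 2 < r ^ 2 := by nlinarith
  have hK₁0 : 0 ≤ K₁ := le_trans (abs_nonneg _) (hK₁ _ _ hwit1 hwit2)
  have hK₂0 : 0 ≤ K₂ := le_trans (abs_nonneg _) (hK₂ _ _ hwit1 hwit2)
  set m : ℝ := min 1 b₁ with hm_def
  have hm : 0 < m := lt_min one_pos hb₁
  set β : ℝ := max 1 ((2 + 4 * r * K₁ + 2 * b₂ + K₂) / (m * r ^ 2)) with hβ_def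
  have hβ1 : (1:ℝ) ≤ β := le_max_left _ _
  have hβ0 : (0:ℝ) < β := by linarith
  refine ⟨β, hβ0, ?_⟩
  intro φ ψ h1 h2
  -- abbreviations
  set C : ℝ := Real.exp (-β * r ^ 2) with hC_def
  set E : ℝ := Real.exp (-β * (φ ^ 2 + ψ ^ 2)) with hE_def
  have hEpos : 0 < E := Real.exp_pos _
  have hCpos : 0 < C := Real.exp_pos _
  have hCE : C ≤ E := by
    apply Real.exp_le_exp.mpr
    nlinarith
  -- First second derivative
  have hd1 : deriv (deriv (fun x : ℝ =>
      Real.exp (-β * r ^ 2) - Real.exp (-β * (x ^ 2 + ψ ^ 2)))) φ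
      = (2 * β - 4 * β ^ 2 * φ ^ 2) * E := by
    have hder : deriv (fun x : ℝ =>
        Real.exp (-β * r ^ 2) - Real.exp (-β * (x ^ 2 + ψ ^ 2)))
        = fun x => 2 * β * x * Real.exp (-β * (x ^ 2 + ψ ^ 2)) := by
      funext x
      have h := ((expA_hasDeriv β (ψ ^ 2) x).const_sub (Real.exp (-β * r ^ 2))).deriv
      rw [h]; ring
    rw [hder]
    have hlin : HasDerivAt (fun x : ℝ => 2 * β * x) (2 * β) φ := by
      simpa using (hasDerivAt_id φ).const_mul (2 * β)
    have h2' := hlin.mul (expA_hasDeriv β (ψ ^ 2) φ)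
    rw [show deriv (fun x : ℝ => 2 * β * x * Real.exp (-β * (x ^ 2 + ψ ^ 2))) φ = _ from h2'.deriv, hE_def]; ring
  -- Second second derivative
  have hbd := hsmooth φ ψ h1 h2
  have hEψ : HasDerivAt (fun t : ℝ =>
      Real.exp (-β * r ^ 2) - Real.exp (-β * (φ ^ 2 + t ^ 2)))
      (2 * β * ψ * Real.exp (-β * (φ ^ 2 + ψ ^ 2))) ψ := by
    have h := (expB_hasDeriv β (φ ^ 2) ψ).const_sub (Real.exp (-β * r ^ 2))
    exact h.congr_deriv (by ring)
  have hd2 : deriv (deriv (fun y : ℝ =>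
      b φ y * (Real.exp (-β * r ^ 2) - Real.exp (-β * (φ ^ 2 + y ^ 2))))) ψ
      = deriv (deriv (b φ)) ψ * (C - E)
        + 4 * β * ψ * deriv (b φ) ψ * E
        + b φ ψ * ((2 * β - 4 * β ^ 2 * ψ ^ 2) * E) := by
    have hU : IsOpen {y : ℝ | r ^ 2 / 4 < φ ^ 2 + y ^ 2 ∧ φ ^ 2 + y ^ 2 < r ^ 2} := by
      have heq : {y : ℝ | r ^ 2 / 4 < φ ^ 2 + y ^ 2 ∧ φ ^ 2 + y ^ 2 < r ^ 2}
          = (fun y : ℝ => φ ^ 2 + y ^ 2) ⁻¹' Set.Ioo (r ^ 2 / 4) (r ^ 2) := rfl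
      rw [heq]
      exact isOpen_Ioo.preimage (continuous_const.add (continuous_pow 2))
    have hmem : ψ ∈ {y : ℝ | r ^ 2 / 4 < φ ^ 2 + y ^ 2 ∧ φ ^ 2 + y ^ 2 < r ^ 2} := ⟨h1, h2⟩
    have hEq : deriv (fun y : ℝ =>
        b φ y * (Real.exp (-β * r ^ 2) - Real.exp (-β * (φ ^ 2 + y ^ 2))))
        =ᶠ[nhds ψ] fun y =>
          deriv (b φ) y * (Real.exp (-β * r ^ 2) - Real.exp (-β * (φ ^ 2 + y ^ 2)))
          + b φ y * (2 * β * y * Real.exp (-β * (φ ^ 2 + y ^ 2))) := by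
      filter_upwards [hU.mem_nhds hmem] with y hy
      have hby := (hsmooth φ y hy.1 hy.2).1
      have hEy : HasDerivAt (fun t : ℝ =>
          Real.exp (-β * r ^ 2) - Real.exp (-β * (φ ^ 2 + t ^ 2)))
          (2 * β * y * Real.exp (-β * (φ ^ 2 + y ^ 2))) y := by
        have h := (expB_hasDeriv β (φ ^ 2) y).const_sub (Real.exp (-β * r ^ 2))
        exact h.congr_deriv (by ring)
      exact (hby.hasDerivAt.mul hEy).deriv
    rw [hEq.deriv_eq]
    have hF1 := hbd.2.hasDerivAt.mul hEψ
    have hlin : HasDerivAt (fun y : ℝ => 2 * β * y) (2 * β) ψ := by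
      simpa using (hasDerivAt_id ψ).const_mul (2 * β)
    have hmul := hlin.mul (expB_hasDeriv β (φ ^ 2) ψ)
    have hF2 := hbd.1.hasDerivAt.mul hmul
    rw [show deriv (fun y : ℝ => deriv (b φ) y * (Real.exp (-β * r ^ 2) - Real.exp (-β * (φ ^ 2 + y ^ 2))) + b φ y * (2 * β * y * Real.exp (-β * (φ ^ 2 + y ^ 2)))) ψ = _ from (hF1.add hF2).deriv, hC_def, hE_def]; simp only [Pi.mul_apply]; ring
  rw [hd1, hd2]
  -- Now the inequality.
  obtain ⟨hbB1, hbB2⟩ := hb φ ψ h1 h2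
  have hb'1 := hK₁ φ ψ h1 h2
  have hb''2 := hK₂ φ ψ h1 h2
  set b' : ℝ := deriv (b φ) ψ
  set b'' : ℝ := deriv (deriv (b φ)) ψ
  set B : ℝ := b φ ψ
  -- |ψ| ≤ r
  have hψr : |ψ| ≤ r := by
    have hψ2 : ψ ^ 2 ≤ r ^ 2 := by nlinarith
    refine abs_le.mpr ⟨?_, ?_⟩ <;> nlinarith
  -- bound A1 : b'' * (C - E) ≤ K₂ * E
  have hA1 : b'' * (C - E) ≤ K₂ * E := by
    calc b'' * (C - E) ≤ |b'' * (C - E)| := le_abs_self _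
      _ = |b''| * |C - E| := abs_mul _ _
      _ ≤ K₂ * E := by
          apply mul_le_mul hb''2 _ (abs_nonneg _) hK₂0
          rw [abs_of_nonpos (by linarith)]
          linarith
  -- bound A2 : 4βψb'E ≤ 4βrK₁E
  have hpb : ψ * b' ≤ r * K₁ := by
    calc ψ * b' ≤ |ψ * b'| := le_abs_self _
      _ = |ψ| * |b'| := abs_mul _ _
      _ ≤ r * K₁ := mul_le_mul hψr hb'1 (abs_nonneg _) (le_of_lt hr)
  have hA2 : 4 * β * ψ * b' * E ≤ 4 * β * r * K₁ * E := by
    have h4 : (0:ℝ) ≤ 4 * β * E := by positivity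
    nlinarith [mul_le_mul_of_nonneg_left hpb h4]
  -- bound A3/A4 : B * ((2β - 4β²ψ²) E) ≤ 2βb₂E - 4β²ψ²b₁E
  have hA3 : B * ((2 * β - 4 * β ^ 2 * ψ ^ 2) * E) ≤ 2 * β * b₂ * E - 4 * β ^ 2 * ψ ^ 2 * b₁ * E := by
    have e1 : 2 * β * B * E ≤ 2 * β * b₂ * E := by
      nlinarith [mul_le_mul_of_nonneg_left hbB2 (show (0:ℝ) ≤ 2 * β * E by positivity)]
    have e2 : 4 * β ^ 2 * ψ ^ 2 * b₁ * E ≤ 4 * β ^ 2 * ψ ^ 2 * B * E := by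
      nlinarith [mul_le_mul_of_nonneg_left hbB1 (show (0:ℝ) ≤ 4 * β ^ 2 * ψ ^ 2 * E by positivity)]
    nlinarith
  -- bound A5 : -4β²φ²E - 4β²ψ²b₁E ≤ -β²mr²E
  have h5 : m * (φ ^ 2 + ψ ^ 2) ≤ φ ^ 2 + b₁ * ψ ^ 2 := by
    have := min_le_left (1:ℝ) b₁
    have := min_le_right (1:ℝ) b₁
    nlinarith [sq_nonneg φ, sq_nonneg ψ]
  have h6 : m * (r ^ 2 / 4) ≤ φ ^ 2 + b₁ * ψ ^ 2 := by nlinarith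
  have hA5 : -(4 * β ^ 2 * φ ^ 2 * E) - 4 * β ^ 2 * ψ ^ 2 * b₁ * E ≤ -(β ^ 2 * m * r ^ 2 * E) := by
    have h4 : (0:ℝ) ≤ 4 * β ^ 2 * E := by positivity
    nlinarith [mul_le_mul_of_nonneg_left h6 h4]
  -- key bracket inequality
  have hkey : 2 + 4 * r * K₁ + 2 * b₂ + K₂ ≤ β * (m * r ^ 2) := by
    have hle : (2 + 4 * r * K₁ + 2 * b₂ + K₂) / (m * r ^ 2) ≤ β := le_max_right _ _
    rwa [div_le_iff₀ (by positivity)] at hle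
  have hkey2 : (2 + 4 * r * K₁ + 2 * b₂) * β + K₂ ≤ β ^ 2 * m * r ^ 2 := by
    nlinarith [mul_le_mul_of_nonneg_left hkey (le_of_lt hβ0),
      mul_nonneg hK₂0 (by linarith : (0:ℝ) ≤ β - 1)]
  have hA6 : 2 * β * E + K₂ * E + 4 * β * r * K₁ * E + 2 * β * b₂ * E - β ^ 2 * m * r ^ 2 * E ≤ 0 := by
    have hbr : 2 * β + K₂ + 4 * β * r * K₁ + 2 * β * b₂ - β ^ 2 * m * r ^ 2 ≤ 0 := by nlinarith
    nlinarith [mul_le_mul_of_nonneg_right hbr (le_of_lt hEpos)]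
  linarith
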